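/- Let q = 2^n, α ∈ F_q*, and m a nonnegative integer. A polynomial f ∈ F_q[x] of degree ≤ m satisfies D_α f = 0 (i.e. f(x) = f(x+α) identically) if and only if there exists h ∈ F_q[x] with deg h ≤ ⌊m/2⌋ such that f(x) = h(x(x+α)). -/

import Mathlib

open Polynomial

private lemma const_of_inv {F : Type*} [Field F] {α : F} (hα : α ≠ 0) {p : Polynomial F}
    (hdeg : p.natDegree ≤ 1) (hinv : p.comp (X + C α) = p) : p = C (p.coeff 0) := by
  have hp : p = C (p.coeff 1) * X + C (p.coeff 0) := eq_X_add_C_of_natDegree_le_one hdeg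
  have hc : (C (p.coeff 1) * X + C (p.coeff 0)).comp (X + C α)
      = C (p.coeff 1) * X + C (p.coeff 0) := by rw [← hp, hinv, hp]
  simp only [add_comp, mul_comp, C_comp, X_comp] at hc
  have h0 : C (p.coeff 1) * C α = 0 := by linear_combination hc
  rw [← C_mul, C_eq_zero, mul_eq_zero] at h0
  have h1 : p.coeff 1 = 0 := h0.resolve_right hα
  nth_rewrite 1 [hp]
  rw [h1, C_0, zero_mul, zero_add]

private lemma key_forward {F : Type*} [Field F] {α : F} (hα : α ≠ 0) (h2 : α + α = 0) :
    ∀ m : ℕ, ∀ f : Polynomial F, f.natDegree ≤ m → f.comp (X + C α) = f →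
      ∃ h : Polynomial F, h.natDegree ≤ m / 2 ∧ f = h.comp (X * (X + C α)) := by
  intro m
  induction m using Nat.strong_induction_on with
  | _ m ih =>
    intro f hfm hinv
    have hCC : (C α + C α : Polynomial F) = 0 := by rw [← C_add, h2, C_0]
    have hg : (X * (X + C α)).comp (X + C α) = X * (X + C α) := by
      simp only [mul_comp, X_comp, add_comp, C_comp]
      rw [add_assoc, hCC, add_zero, mul_comm]
    by_cases hdeg : f.natDegree ≤ 1
    · refine ⟨C (f.coeff 0), by simp, ?_⟩
      rw [C_comp, ← const_of_inv hα hdeg hinv]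
    · push_neg at hdeg
      have hmonic : (X * (X + C α)).Monic := monic_X.mul (monic_X_add_C α)
      have hgdeg : (X * (X + C α)).natDegree = 2 := by
        rw [natDegree_mul X_ne_zero (X_add_C_ne_zero α), natDegree_X, natDegree_X_add_C]
      set g : Polynomial F := X * (X + C α) with hgdef
      set q := f /ₘ g with hq
      set r := f %ₘ g with hr
      have hfe : r + g * q = f := modByMonic_add_div f g
      have hrlt : r.degree < g.degree := degree_modByMonic_lt f hmonic
      -- uniqueness: composing with X + C α
      have hcomp : (r.comp (X + C α)) + g * (q.comp (X + C α)) = f := by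
        have : (r + g * q).comp (X + C α) = f := by rw [hfe, hinv]
        simpa only [add_comp, mul_comp, hg] using this
      have hrcdeg : (r.comp (X + C α)).degree < g.degree := by
        rcases eq_or_ne r 0 with h0 | h0
        · simpa [h0] using hrlt
        · have h1 : (r.comp (X + C α)).natDegree = r.natDegree := by
            rw [natDegree_comp, natDegree_X_add_C, mul_one]
          have h2' : r.comp (X + C α) ≠ 0 := fun hh => by
            have := fun x => congrArg (fun p => Polynomial.eval (x + α) p) hh
            -- easier: comp with X - C α recovers r
            have : (r.comp (X + C α)).comp (X - C α) = r := by
              rw [comp_assoc]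
              simp [sub_add_cancel]
            rw [hh, zero_comp] at this
            exact h0 this.symm
          rw [degree_eq_natDegree h2', h1, ← degree_eq_natDegree h0]
          exact hrlt
      have huniq := div_modByMonic_unique (q.comp (X + C α)) (r.comp (X + C α)) hmonic
        ⟨hcomp, hrcdeg⟩
      have hqinv : q.comp (X + C α) = q := by rw [← huniq.1]
      have hrinv : r.comp (X + C α) = r := by rw [← huniq.2]
      -- r is constant
      have hgd2 : g.degree = 2 := by
        rw [degree_eq_natDegree hmonic.ne_zero, hgdeg]; rfl
      have hrdeg1 : r.natDegree ≤ 1 := by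
        rcases eq_or_ne r 0 with h0 | h0
        · simp [h0]
        · have hlt : r.natDegree < 2 := by
            have h3 := hgd2 ▸ hrlt
            exact (natDegree_lt_iff_degree_lt h0).mpr (by exact_mod_cast h3)
          omega
      have hrC : r = C (r.coeff 0) := const_of_inv hα hrdeg1 hrinv
      -- degree of q
      have hqdeg : q.natDegree ≤ m - 2 := by
        rw [hq, natDegree_divByMonic f hmonic, hgdeg]
        omega
      have hm2 : 2 ≤ m := le_trans hdeg hfm
      obtain ⟨h', hh'deg, hh'⟩ := ih (m - 2) (by omega) q hqdeg hqinv
      refine ⟨X * h' + C (r.coeff 0), ?_, ?_⟩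
      · refine le_trans (natDegree_add_le _ _) ?_
        have h1 : (X * h' : Polynomial F).natDegree ≤ 1 + h'.natDegree := by
          simpa using natDegree_mul_le (p := (X : Polynomial F)) (q := h')
        have : (1 : ℕ) + h'.natDegree ≤ m / 2 := by omega
        simp only [natDegree_C, max_le_iff]
        exact ⟨le_trans h1 this, Nat.zero_le _⟩
      · rw [add_comp, mul_comp, X_comp, C_comp, ← hh', ← hfe, hrC]
        simp only [coeff_C_zero]
        ring

/-- Kernel of `D_α` on `𝔽_q[x]_m`: a polynomial `f` of degree at most `m` satisfies
`f(x) = f(x+α)` identically iff `f(x) = h(x(x+α))` for some `h` of degree at most `⌊m/2⌋`. -/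
theorem stmt6 (n : ℕ) (F : Type*) [Field F] [Fintype F] (hF : Fintype.card F = 2 ^ n)
    (α : F) (hα : α ≠ 0) (m : ℕ) (f : Polynomial F) (hf : f.natDegree ≤ m) :
    f.comp (X + C α) = f ↔
      ∃ h : Polynomial F, h.natDegree ≤ m / 2 ∧ f = h.comp (X * (X + C α)) := by
  -- characteristic 2
  have hchar : α + α = 0 := by
    obtain ⟨k, hp, hcard⟩ := FiniteField.card F (ringChar F)
    have h2 : ringChar F = 2 := by
      have hdvd : ringChar F ∣ 2 ^ n := by
        rw [← hF, hcard]
        exact dvd_pow_self _ k.pos.ne'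
      exact (Nat.prime_dvd_prime_iff_eq hp Nat.prime_two).mp
        (hp.dvd_of_dvd_pow hdvd)
    haveI : CharP F 2 := h2 ▸ ringChar.charP F
    have : (2 : F) = 0 := by exact_mod_cast CharP.cast_eq_zero F 2
    linear_combination α * this
  constructor
  · exact fun hinv => key_forward hα hchar m f hf hinv
  · rintro ⟨h, _, rfl⟩
    rw [comp_assoc]
    congr 1
    simp only [mul_comp, X_comp, add_comp, C_comp]
    rw [add_assoc, show (C α + C α : Polynomial F) = 0 by rw [← C_add, hchar, C_0],
      add_zero, mul_comm]
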